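/- Let C be an object of 𝒞 and suppose there exist an object A′ in 𝒞 and a non-zero morphism c : C → ΣA′. Let X → Y → C --d--> ΣX be an Auslander-Reiten triangle in 𝒯, and suppose α : A → X is a 𝒞-cover. Then there exists an Auslander-Reiten triangle A → B → C → ΣA in 𝒞 (with first term the object A and third term the object C). -/

import Mathlib

set_option linter.unusedSectionVars false
set_option maxHeartbeats 1000000


open CategoryTheory CategoryTheory.Limits CategoryTheory.Pretriangulated

universe v u

variable {k : Type} [Field k]
variable {T : Type u} [Category.{v} T] [Preadditive T] [Linear k T]
  [HasZeroObject T] [HasShift T ℤ] [∀ n : ℤ, (shiftFunctor T n).Additive]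
  [Pretriangulated T]

/-- powers of an endomorphism -/
def cpow {A : T} (h : A ⟶ A) : ℕ → (A ⟶ A)
  | 0 => 𝟙 A
  | n + 1 => cpow h n ≫ h

lemma cpow_add {A : T} (h : A ⟶ A) (m n : ℕ) :
    cpow h (m + n) = cpow h m ≫ cpow h n := by
  induction n with
  | zero => simp [cpow]
  | succ n ih => rw [← Nat.add_assoc, cpow, cpow, ih, Category.assoc]

lemma cpow_succ' {A : T} (h : A ⟶ A) (n : ℕ) :
    cpow h (n + 1) = h ≫ cpow h n := by
  have := cpow_add h 1 n
  rw [Nat.add_comm 1 n] at this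
  rw [this]; simp [cpow]

lemma cpow_comm {A : T} (h : A ⟶ A) (m n : ℕ) :
    cpow h m ≫ cpow h n = cpow h n ≫ cpow h m := by
  rw [← cpow_add, ← cpow_add, Nat.add_comm]

/-- Fitting-style lemma. -/
lemma fitting {A : T} [FiniteDimensional k (A ⟶ A)] (h : A ⟶ A) :
    ∃ (e z : A ⟶ A) (n : ℕ), e ≫ e = e ∧ cpow h n ≫ e = cpow h n ∧ e = h ≫ z := by
  classical
  obtain ⟨a, c, hc_comm, hkey⟩ :
      ∃ (a : ℕ) (c : A ⟶ A), (∀ m : ℕ, c ≫ cpow h m = cpow h m ≫ c) ∧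
        cpow h a = cpow h (a + 1) ≫ c := by
    have hnli : ¬ LinearIndependent k
        (fun i : Fin (Module.finrank k (A ⟶ A) + 1) => cpow h i) := by
      intro hli
      have := hli.fintype_card_le_finrank
      simp at this
    obtain ⟨g, hg0, i₀, hi₀⟩ := Fintype.not_linearIndependent_iff.mp hnli
    set s := Finset.univ.filter (fun i => g i ≠ 0) with hs
    have hne : s.Nonempty := ⟨i₀, by simp [hs, hi₀]⟩
    set a := s.min' hne with ha
    have hamem : a ∈ s := s.min'_mem hne
    have hga : g a ≠ 0 := by
      have := hamem; rw [hs] at this; simpa using this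
    have hsub : ∀ x ∈ Finset.univ, x ∉ s → g x • cpow h (x : ℕ) = 0 := by
      intro x _ hx
      have : g x = 0 := by
        by_contra hgx
        exact hx (by simp [hs, hgx])
      rw [this, zero_smul]
    have hsum_s : ∑ i ∈ s, g i • cpow h (i : ℕ) = 0 := by
      rw [Finset.sum_subset (Finset.subset_univ s) hsub]; exact hg0
    have hsplit : g a • cpow h (a : ℕ) + ∑ i ∈ s.erase a, g i • cpow h (i : ℕ) = 0 := by
      rw [Finset.add_sum_erase s (fun i => g i • cpow h (i : ℕ)) hamem]; exact hsum_s
    -- each i in erase has (i:ℕ) ≥ a+1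
    have hgt : ∀ i ∈ s.erase a, (a : ℕ) + 1 ≤ (i : ℕ) := by
      intro i hi
      have h1 : (a : ℕ) ≤ (i : ℕ) := Fin.le_def.mp (s.min'_le i (Finset.mem_of_mem_erase hi))
      have h2 : i ≠ a := Finset.ne_of_mem_erase hi
      have h3 : (a : ℕ) ≠ (i : ℕ) := fun hh => h2 (Fin.ext hh.symm)
      omega
    refine ⟨(a : ℕ), (-(g a)⁻¹) • ∑ i ∈ s.erase a, g i • cpow h ((i : ℕ) - (a : ℕ) - 1),
      ?_, ?_⟩
    · intro m
      rw [Linear.smul_comp, Linear.comp_smul, Preadditive.sum_comp, Preadditive.comp_sum]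
      congr 1
      refine Finset.sum_congr rfl ?_
      intro i _
      rw [Linear.smul_comp, Linear.comp_smul, cpow_comm]
    · rw [Linear.comp_smul, Preadditive.comp_sum]
      have : ∀ i ∈ s.erase a,
          cpow h ((a : ℕ) + 1) ≫ (g i • cpow h ((i : ℕ) - (a : ℕ) - 1)) = g i • cpow h (i : ℕ) := by
        intro i hi
        rw [Linear.comp_smul, ← cpow_add]
        congr 2
        have := hgt i hi
        omega
      rw [Finset.sum_congr rfl this]
      have : ∑ i ∈ s.erase a, g i • cpow h (i : ℕ) = - (g a • cpow h (a : ℕ)) := by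
        rw [eq_neg_iff_add_eq_zero, add_comm]; exact hsplit
      rw [this, smul_neg, neg_smul, neg_neg, smul_smul, inv_mul_cancel₀ hga, one_smul]
  -- commutation of cpow c with cpow h
  have hcc : ∀ j m : ℕ, cpow c j ≫ cpow h m = cpow h m ≫ cpow c j := by
    intro j
    induction j with
    | zero => intro m; simp [cpow]
    | succ j ih =>
      intro m
      rw [cpow, Category.assoc, hc_comm m, ← Category.assoc, ih m, Category.assoc]
  -- key shifted
  have hkey' : ∀ j : ℕ, cpow h (j + a) = cpow h (j + a + 1) ≫ c := by
    intro j
    rw [cpow_add h j a, hkey, show j + a + 1 = j + (a + 1) by omega, cpow_add h j (a+1),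
      Category.assoc]
  have hL2 : ∀ j : ℕ, cpow h a = cpow h (a + j) ≫ cpow c j := by
    intro j
    induction j with
    | zero => simp [cpow]
    | succ j ih =>
      have hthis := hkey' j
      rw [Nat.add_comm j a] at hthis
      rw [show a + (j+1) = (a+j)+1 by omega, cpow_succ' c j, ← Category.assoc, ← hthis]
      exact ih
  by_cases ha0 : a = 0
  · subst ha0
    refine ⟨𝟙 A, c, 0, by simp, by simp, ?_⟩
    have := hkey
    simp only [cpow, Category.id_comp] at this
    exact this
  · obtain ⟨m, rfl⟩ : ∃ m, a = m + 1 := ⟨a - 1, by omega⟩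
    set a := m + 1
    refine ⟨cpow h a ≫ cpow c a, cpow h m ≫ cpow c a, a, ?_, ?_, ?_⟩
    · have : (cpow h a ≫ cpow c a) ≫ cpow h a ≫ cpow c a
          = (cpow h (a + a) ≫ cpow c a) ≫ cpow c a := by
        rw [cpow_add h a a]
        simp only [Category.assoc]
        rw [← Category.assoc (cpow c a) (cpow h a) (cpow c a), hcc a a, Category.assoc]
      rw [this, ← hL2 a]
    · rw [← Category.assoc, ← cpow_add h a a, ← hL2 a]
    · rw [show cpow h a = h ≫ cpow h m from cpow_succ' h m, Category.assoc]

/-- `α : A ⟶ X` is an `S`-precover of `X`. -/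
def IsPrecover (S : Set T) {A X : T} (α : A ⟶ X) : Prop :=
  A ∈ S ∧ ∀ A' : T, A' ∈ S → ∀ f : A' ⟶ X, ∃ g : A' ⟶ A, g ≫ α = f

/-- `α : A ⟶ X` is an `S`-cover: a right-minimal `S`-precover. -/
def IsCover (S : Set T) {A X : T} (α : A ⟶ X) : Prop :=
  IsPrecover S α ∧ ∀ f : A ⟶ A, f ≫ α = α → IsIso f

/-- Wakamatsu-type lemma: if `α` is an `S`-cover then any map from an object of `S`
to `A⟦1⟧` vanishing after composition with `α⟦1⟧` is zero. -/
lemma lemmaW (S : Set T)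
    (hext : ∀ {A B C : T} (f : A ⟶ B) (g : B ⟶ C) (h : C ⟶ A⟦(1 : ℤ)⟧),
      Triangle.mk f g h ∈ (distTriang T) → A ∈ S → C ∈ S → B ∈ S)
    {X A : T} (α : A ⟶ X) (hα : IsCover S α)
    {C' : T} (hC' : C' ∈ S) (φ : C' ⟶ A⟦(1 : ℤ)⟧) (hφ : φ ≫ α⟦(1:ℤ)⟧' = 0) : φ = 0 := by
  obtain ⟨Q, x, δ, hTα⟩ := distinguished_cocone_triangle α
  obtain ⟨ψ, hψ⟩ := Triangle.coyoneda_exact₁ _ hTα φ hφ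
  obtain ⟨E, iE, pE, hTE⟩ := distinguished_cocone_triangle₂ φ
  have hES : E ∈ S := hext iE pE φ hTE hα.1.1 hC'
  obtain ⟨b, hb₁, hb₂⟩ := complete_distinguished_triangle_morphism₂ _ _ hTE hTα (𝟙 A) ψ
    (by exact (congrArg (φ ≫ ·) ((shiftFunctor T (1:ℤ)).map_id A)).trans ((Category.comp_id φ).trans hψ))
  obtain ⟨b', hb'⟩ := hα.1.2 E hES b
  have hcomp : (iE ≫ b') ≫ α = α := by
    rw [Category.assoc, hb']; exact hb₁.trans (Category.id_comp α)
  have hiso : IsIso (iE ≫ b') := hα.2 _ hcomp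
  have h1 : φ ≫ (iE)⟦(1:ℤ)⟧' = 0 := comp_distTriang_mor_zero₃₁ _ hTE
  have h2 : φ ≫ (iE ≫ b' ≫ inv (iE ≫ b'))⟦(1:ℤ)⟧' = φ := by
    rw [show iE ≫ b' ≫ inv (iE ≫ b') = 𝟙 A by
      rw [← Category.assoc, IsIso.hom_inv_id]]
    simp
  rw [← h2, Functor.map_comp, ← Category.assoc, h1, zero_comp]

/-- `X ⟶ Y ⟶ Z --d--> ΣX` is an Auslander-Reiten triangle in `T`. -/
def IsARTriangle {X Y Z : T} (f : X ⟶ Y) (g : Y ⟶ Z) (d : Z ⟶ X⟦(1 : ℤ)⟧) : Prop :=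
  (Triangle.mk f g d ∈ distTriang T) ∧ d ≠ 0 ∧
    (∀ (X' : T) (u : X ⟶ X'), ¬(∃ v : X' ⟶ X, u ≫ v = 𝟙 X) → ∃ w : Y ⟶ X', f ≫ w = u) ∧
    (∀ (Z' : T) (u : Z' ⟶ Z), ¬(∃ v : Z ⟶ Z', v ≫ u = 𝟙 Z) → ∃ w : Z' ⟶ Y, w ≫ g = u)

/-- `A ⟶ B ⟶ C --h--> ΣA` is an Auslander-Reiten triangle in the subcategory
determined by `S`. -/
def IsARTriangleIn (S : Set T) {A B C : T} (f : A ⟶ B) (g : B ⟶ C)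
    (h : C ⟶ A⟦(1 : ℤ)⟧) : Prop :=
  A ∈ S ∧ B ∈ S ∧ C ∈ S ∧ (Triangle.mk f g h ∈ distTriang T) ∧ h ≠ 0 ∧
    (∀ A' : T, A' ∈ S → ∀ u : A ⟶ A',
      ¬(∃ v : A' ⟶ A, u ≫ v = 𝟙 A) → ∃ w : B ⟶ A', f ≫ w = u) ∧
    (∀ C' : T, C' ∈ S → ∀ u : C' ⟶ C,
      ¬(∃ v : C ⟶ C', v ≫ u = 𝟙 C) → ∃ w : C' ⟶ B, w ≫ g = u)

/-- Main theorem, (i) ⟹ (ii): if `C ∈ S` admits a non-zero morphism to a shift of an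
object of `S`, `X ⟶ Y ⟶ C --d--> ΣX` is an Auslander-Reiten triangle in `T`, and
`α : A ⟶ X` is an `S`-cover, then there is an Auslander-Reiten triangle
`A ⟶ B ⟶ C ⟶ ΣA` in the subcategory `S`. -/
theorem AR_triangle_in_subcategory_of_cover (S : Set T)
    [EssentiallySmall.{v} T] [IsIdempotentComplete T]
    (hfd : ∀ X Y : T, FiniteDimensional k (X ⟶ Y))
    (hiso : ∀ {X Y : T}, (X ≅ Y) → X ∈ S → Y ∈ S)
    (hext : ∀ {A B C : T} (f : A ⟶ B) (g : B ⟶ C) (h : C ⟶ A⟦(1 : ℤ)⟧),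
      Triangle.mk f g h ∈ (distTriang T) → A ∈ S → C ∈ S → B ∈ S)
    (hsum : ∀ {A A₁ : T} (i : A₁ ⟶ A) (p : A ⟶ A₁), i ≫ p = 𝟙 A₁ → A ∈ S → A₁ ∈ S)
    {C A' : T} (hC : C ∈ S) (hA' : A' ∈ S)
    (c : C ⟶ A'⟦(1 : ℤ)⟧) (hc : c ≠ 0)
    {X Y : T} (f : X ⟶ Y) (g : Y ⟶ C) (d : C ⟶ X⟦(1 : ℤ)⟧)
    (hAR : IsARTriangle f g d)
    {A : T} (α : A ⟶ X) (hα : IsCover S α) :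
    ∃ (B : T) (u : A ⟶ B) (v : B ⟶ C) (w : C ⟶ A⟦(1 : ℤ)⟧),
      IsARTriangleIn S u v w := by
  obtain ⟨⟨hAS, hfac⟩, hmin⟩ := hα
  have hα' : IsCover S α := ⟨⟨hAS, hfac⟩, hmin⟩
  obtain ⟨hARdist, hd0, hARleft, hARright⟩ := hAR
  have hfg : f ≫ g = 0 := comp_distTriang_mor_zero₁₂ _ hARdist
  have hgd : g ≫ d = 0 := comp_distTriang_mor_zero₂₃ _ hARdist
  have hdf : d ≫ f⟦(1:ℤ)⟧' = 0 := comp_distTriang_mor_zero₃₁ _ hARdist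
  -- Step 1 : `d` factors through `α⟦1⟧`
  obtain ⟨Q, x, δ, hTα⟩ := distinguished_cocone_triangle α
  have hxns : ¬ ∃ r : Q ⟶ X, x ≫ r = 𝟙 X := by
    rintro ⟨r, hr⟩
    have hα0 : α = 0 := by
      have h1 : α ≫ x = 0 := comp_distTriang_mor_zero₁₂ _ hTα
      calc α = α ≫ (x ≫ r) := by rw [hr, Category.comp_id]
        _ = (α ≫ x) ≫ r := by rw [Category.assoc]
        _ = 0 := by rw [h1, zero_comp]
    have hzero : ∀ (W : T), W ∈ S → ∀ φ : W ⟶ X, φ = 0 := by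
      intro W hW φ
      obtain ⟨γ, hγ⟩ := hfac W hW φ
      rw [← hγ, hα0, comp_zero]
    obtain ⟨E, iE, pE, hTE⟩ := distinguished_cocone_triangle₂ c
    have hpE_nr : ¬ ∃ s : C ⟶ E, s ≫ pE = 𝟙 C := by
      rintro ⟨s, hs⟩
      apply hc
      have h2 : pE ≫ c = 0 := comp_distTriang_mor_zero₂₃ _ hTE
      calc c = (s ≫ pE) ≫ c := by rw [hs, Category.id_comp]
        _ = s ≫ (pE ≫ c) := by rw [Category.assoc]
        _ = 0 := by rw [h2, comp_zero]
    obtain ⟨q, hq⟩ := hARright E pE hpE_nr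
    have h3 : (iE ≫ q) ≫ g = 0 := by
      rw [Category.assoc, hq]
      exact comp_distTriang_mor_zero₁₂ _ hTE
    obtain ⟨rr, hrr⟩ : ∃ rr : A' ⟶ X, iE ≫ q = rr ≫ f :=
      Triangle.coyoneda_exact₂ _ hARdist (iE ≫ q) h3
    have hiq : iE ≫ q = 0 := by
      rw [hrr, hzero A' hA' rr, zero_comp]
    obtain ⟨s, hs⟩ : ∃ s : C ⟶ Y, q = pE ≫ s := Triangle.yoneda_exact₂ _ hTE q hiq
    have h4 : pE ≫ (𝟙 C - s ≫ g) = 0 := by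
      rw [Preadditive.comp_sub, Category.comp_id, ← Category.assoc, ← hs, hq, sub_self]
    obtain ⟨m', hm'⟩ : ∃ m' : A'⟦(1:ℤ)⟧ ⟶ C, 𝟙 C - s ≫ g = c ≫ m' :=
      Triangle.yoneda_exact₃ _ hTE (𝟙 C - s ≫ g) h4
    obtain ⟨m₀, hm₀⟩ := (shiftFunctor T (1:ℤ)).map_surjective (m' ≫ d)
    apply hd0
    have h5 : d = (𝟙 C - s ≫ g) ≫ d := by
      rw [Preadditive.sub_comp, Category.id_comp, Category.assoc, hgd, comp_zero, sub_zero]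
    rw [h5, hm', Category.assoc, ← hm₀, hzero A' hA' m₀]
    simp
  obtain ⟨y, hy⟩ := hARleft Q x hxns
  have hdx : d ≫ x⟦(1:ℤ)⟧' = 0 := by
    rw [← hy, Functor.map_comp, ← Category.assoc, hdf, zero_comp]
  obtain ⟨w', hw'⟩ : ∃ w' : C ⟶ A⟦(1:ℤ)⟧, d = w' ≫ (-(α⟦(1:ℤ)⟧')) :=
    Triangle.coyoneda_exact₁ _ (rot_of_distTriang _ hTα) d (by exact hdx)
  have hw : (-w') ≫ α⟦(1:ℤ)⟧' = d := by
    rw [Preadditive.neg_comp, hw', Preadditive.comp_neg]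
  obtain ⟨B, u, v, hT⟩ := distinguished_cocone_triangle₂ (-w')
  set w := -w' with hwdef
  clear hw'
  have hBS : B ∈ S := hext u v w hT hAS hC
  have hw0 : w ≠ 0 := by
    intro h0; apply hd0; rw [← hw, h0, zero_comp]
  have huv : u ≫ v = 0 := comp_distTriang_mor_zero₁₂ _ hT
  have hvw : v ≫ w = 0 := comp_distTriang_mor_zero₂₃ _ hT
  have hwu : w ≫ u⟦(1:ℤ)⟧' = 0 := comp_distTriang_mor_zero₃₁ _ hT
  -- right condition
  have hright : ∀ C'' : T, C'' ∈ S → ∀ u'' : C'' ⟶ C,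
      ¬(∃ s : C ⟶ C'', s ≫ u'' = 𝟙 C) → ∃ t : C'' ⟶ B, t ≫ v = u'' := by
    intro C'' hC'' u'' hnr
    obtain ⟨t₀, ht₀⟩ := hARright C'' u'' hnr
    have h1 : (u'' ≫ w) ≫ α⟦(1:ℤ)⟧' = 0 := by
      rw [Category.assoc, hw, ← ht₀, Category.assoc, hgd, comp_zero]
    have h2 : u'' ≫ w = 0 := lemmaW S hext α hα' hC'' (u'' ≫ w) h1
    obtain ⟨t, ht⟩ := Triangle.coyoneda_exact₃ _ hT u'' h2
    exact ⟨t, ht.symm⟩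
  -- claim (b)
  have claimb : ∀ e : A ⟶ A, e ≫ e = e → w ≫ e⟦(1:ℤ)⟧' = 0 → e = 0 := by
    intro e he hwe
    obtain ⟨A₂, ι, π, hιπ, hπι⟩ := IsIdempotentComplete.idempotents_split A e he
    have hwπ : w ≫ π⟦(1:ℤ)⟧' = 0 := by
      have heπ : e ≫ π = π := by rw [← hπι, Category.assoc, hιπ, Category.comp_id]
      rw [← heπ, Functor.map_comp, ← Category.assoc, hwe, zero_comp]
    obtain ⟨Q₂, x₂, δ₂, hT₂⟩ := distinguished_cocone_triangle (ι ≫ α)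
    by_cases hsec : ∃ r : Q₂ ⟶ X, x₂ ≫ r = 𝟙 X
    · obtain ⟨r, hr⟩ := hsec
      have hα₂0 : ι ≫ α = 0 := by
        have h1 : (ι ≫ α) ≫ x₂ = 0 := comp_distTriang_mor_zero₁₂ _ hT₂
        calc ι ≫ α = (ι ≫ α) ≫ (x₂ ≫ r) := by rw [hr, Category.comp_id]
          _ = ((ι ≫ α) ≫ x₂) ≫ r := by simp only [Category.assoc]
          _ = 0 := by rw [h1, zero_comp]
      have heα : e ≫ α = 0 := by rw [← hπι, Category.assoc, hα₂0, comp_zero]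
      have h2 : (𝟙 A - e) ≫ α = α := by
        rw [Preadditive.sub_comp, Category.id_comp, heα, sub_zero]
      have hiso : IsIso (𝟙 A - e) := hmin _ h2
      calc e = (e ≫ (𝟙 A - e)) ≫ inv (𝟙 A - e) := by
            rw [Category.assoc, IsIso.hom_inv_id, Category.comp_id]
        _ = 0 := by
            rw [Preadditive.comp_sub, Category.comp_id, he, sub_self, zero_comp]
    · obtain ⟨y₂, hy₂⟩ := hARleft Q₂ x₂ hsec
      have hdx₂ : d ≫ x₂⟦(1:ℤ)⟧' = 0 := by
        rw [← hy₂, Functor.map_comp, ← Category.assoc, hdf, zero_comp]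
      obtain ⟨g₂, hg₂⟩ : ∃ g₂ : C ⟶ A₂⟦(1:ℤ)⟧, d = g₂ ≫ (-((ι ≫ α)⟦(1:ℤ)⟧')) :=
        Triangle.coyoneda_exact₁ _ (rot_of_distTriang _ hT₂) d (by exact hdx₂)
      have hg₂' : d = (-g₂) ≫ (ι ≫ α)⟦(1:ℤ)⟧' := by
        rw [Preadditive.neg_comp, ← Preadditive.comp_neg, ← hg₂]
      have huniq : w - (-g₂) ≫ ι⟦(1:ℤ)⟧' = 0 := by
        apply lemmaW S hext α hα' hC
        rw [Preadditive.sub_comp, Category.assoc, ← Functor.map_comp, hw, ← hg₂', sub_self]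
      exfalso
      apply hd0
      have hwg : w = (-g₂) ≫ ι⟦(1:ℤ)⟧' := by
        rw [← sub_eq_zero]; exact huniq
      have hg0 : (-g₂) = 0 := by
        have := hwπ
        rw [hwg, Category.assoc, ← Functor.map_comp, hιπ] at this
        simpa using this
      rw [hg₂', hg0, zero_comp]
  -- left condition
  have hleft : ∀ A'' : T, A'' ∈ S → ∀ u' : A ⟶ A'',
      ¬(∃ v' : A'' ⟶ A, u' ≫ v' = 𝟙 A) → ∃ t : B ⟶ A'', u ≫ t = u' := by
    intro A'' hA'' u' hns
    have hψ : w ≫ u'⟦(1:ℤ)⟧' = 0 := by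
      by_contra hψ0
      obtain ⟨B', u₁, v', hT'⟩ := distinguished_cocone_triangle₂ (w ≫ u'⟦(1:ℤ)⟧')
      have hB'S : B' ∈ S := hext u₁ v' _ hT' hA'' hC
      have hv'nr : ¬ ∃ s : C ⟶ B', s ≫ v' = 𝟙 C := by
        rintro ⟨s, hs⟩
        apply hψ0
        have h2 : v' ≫ (w ≫ u'⟦(1:ℤ)⟧') = 0 := comp_distTriang_mor_zero₂₃ _ hT'
        calc w ≫ u'⟦(1:ℤ)⟧' = (s ≫ v') ≫ (w ≫ u'⟦(1:ℤ)⟧') := by rw [hs, Category.id_comp]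
          _ = s ≫ (v' ≫ (w ≫ u'⟦(1:ℤ)⟧')) := by rw [Category.assoc]
          _ = 0 := by rw [h2, comp_zero]
      obtain ⟨t', ht'⟩ := hright B' hB'S v' hv'nr
      obtain ⟨aa, ha₁, ha₂⟩ := complete_distinguished_triangle_morphism₁ _ _ hT' hT t' (𝟙 C)
        (by exact (Category.comp_id v').trans ht'.symm)
      have ha₂' : (w ≫ u'⟦(1:ℤ)⟧') ≫ aa⟦(1:ℤ)⟧' = w := by exact ha₂.trans (Category.id_comp w)
      set h : A ⟶ A := u' ≫ aa with hhdef
      have hwh : ∀ n : ℕ, w ≫ (cpow h n)⟦(1:ℤ)⟧' = w := by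
        intro n; induction n with
        | zero => simp [cpow]
        | succ n ih =>
          rw [show cpow h (n+1) = cpow h n ≫ h from rfl, Functor.map_comp, ← Category.assoc,
            ih]
          exact (congrArg (w ≫ ·) ((shiftFunctor T (1:ℤ)).map_comp u' aa)).trans ((Category.assoc _ _ _).symm.trans ha₂')
      haveI : FiniteDimensional k (A ⟶ A) := hfd A A
      obtain ⟨e, z, n, he, hne, hez⟩ := fitting (k := k) h
      have hwe : w ≫ e⟦(1:ℤ)⟧' = w := by
        have h1 : w ≫ (cpow h n ≫ e)⟦(1:ℤ)⟧' = w := by rw [hne, hwh n]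
        rw [Functor.map_comp, ← Category.assoc, hwh n] at h1
        exact h1
      have hide : (𝟙 A - e) ≫ (𝟙 A - e) = 𝟙 A - e := by
        simp only [Preadditive.sub_comp, Preadditive.comp_sub, Category.id_comp,
          Category.comp_id, he]
        abel
      have hwem : w ≫ (𝟙 A - e)⟦(1:ℤ)⟧' = 0 := by
        rw [Functor.map_sub, Preadditive.comp_sub, hwe]
        simp
      have hesub := claimb _ hide hwem
      have he1 : e = 𝟙 A := by
        have := sub_eq_zero.mp hesub
        exact this.symm
      exact hns ⟨aa ≫ z, by have := hez; rw [he1, hhdef] at this; exact (Category.assoc _ _ _).symm.trans this.symm⟩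
    obtain ⟨t, ht⟩ := Triangle.yoneda_exact₂ _ (inv_rot_of_distTriang _ hT) u' (by
      have hnat := (shiftEquiv T (1:ℤ)).unitIso.inv.naturality u'
      change (-(w⟦(-1:ℤ)⟧' ≫ (shiftEquiv T (1:ℤ)).unitIso.inv.app A)) ≫ u' = 0
      rw [Preadditive.neg_comp]; erw [Category.assoc]
      dsimp at hnat
      erw [← hnat, ← Category.assoc, ← Functor.map_comp, hψ]
      simp
      erw [Functor.map_zero, zero_comp])
    exact ⟨t, ht.symm⟩
  exact ⟨B, u, v, w, hAS, hBS, hC, hT, hw0, hleft, hright⟩
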